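/- Let k ≥ 2 be an integer (not necessarily even), and in S_{2k−1} let σ = (1 2 … k) and τ = (k k+1 … 2k−1). Then for every bijection f from {1, 2, …, k} to {k, k+1, …, 2k−1} there exists a permutation ρ in the subgroup generated by {σ, τ} such that ρ(x) = f(x) for every x ∈ {1, 2, …, k}. -/

import Mathlib

open Equiv Equiv.Perm Subgroup

private lemma pow_apply_add {n : ℕ} [NeZero n] (c : Equiv.Perm (ZMod n))
    (hc : ∀ z, c z = z + 1) : ∀ (m : ℕ) (z : ZMod n), (c ^ m) z = z + (m : ZMod n) := by
  intro m
  induction m with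
  | zero => simp
  | succ m ih =>
    intro z
    rw [pow_succ', Perm.mul_apply, hc, ih]
    push_cast
    ring

private lemma isCycle_add_one {n : ℕ} [NeZero n] (hn : 2 ≤ n) (c : Equiv.Perm (ZMod n))
    (hc : ∀ z, c z = z + 1) :
    c.IsCycle ∧ c.support = Finset.univ ∧ orderOf c = n := by
  have h1 : (1 : ZMod n) ≠ 0 := by
    intro h
    rw [show (1 : ZMod n) = ((1 : ℕ) : ZMod n) by push_cast; rfl,
      ZMod.natCast_eq_zero_iff, Nat.dvd_one] at h
    omega
  have hmove : ∀ z : ZMod n, c z ≠ z := by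
    intro z h
    rw [hc] at h
    exact h1 (by linear_combination h)
  refine ⟨⟨0, hmove 0, fun y hy => ⟨(y.val : ℤ), ?_⟩⟩, ?_, ?_⟩
  · rw [zpow_natCast, pow_apply_add c hc, zero_add, ZMod.natCast_zmod_val]
  · exact Finset.eq_univ_iff_forall.2 fun z => Perm.mem_support.2 (hmove z)
  · refine (orderOf_eq_iff (by omega)).2 ⟨?_, fun m hm hm0 h => ?_⟩
    · ext z
      rw [pow_apply_add c hc, ZMod.natCast_self, add_zero, Perm.one_apply]
    · have := Equiv.ext_iff.1 h 0
      rw [pow_apply_add c hc, zero_add, Perm.one_apply] at this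
      have hv := congrArg ZMod.val this
      rw [ZMod.val_cast_of_lt hm, ZMod.val_zero] at hv
      omega

private lemma zmod_even_mem {n : ℕ} [NeZero n] (hn : 3 ≤ n)
    (G : Subgroup (Equiv.Perm (ZMod n)))
    (c : Equiv.Perm (ZMod n)) (hc : ∀ z, c z = z + 1) (hcG : c ∈ G)
    (hsc : Equiv.Perm.sign c = 1)
    (e : ℕ) (he : e.Coprime n) (hd0 : ((e : ℕ) : ZMod n) ≠ 0)
    (hg : Equiv.swap 0 ((e : ℕ) : ZMod n) * Equiv.swap 0 (-((e : ℕ) : ZMod n)) ∈ G)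
    (ρ : Equiv.Perm (ZMod n)) (hρ : Equiv.Perm.sign ρ = 1) : ρ ∈ G := by
  set d : ZMod n := ((e : ℕ) : ZMod n) with hd
  set E : ZMod n → Equiv.Perm (ZMod n) := fun x => Equiv.swap x (x + d) with hE
  have hEinv : ∀ x, (E x)⁻¹ = E x := fun x => Equiv.swap_inv _ _
  have hE2 : ∀ x, E x * E x = 1 := fun x => Equiv.swap_mul_self _ _
  -- conjugation by powers of c shifts swaps
  have key : ∀ (m : ℕ) (a b : ZMod n),
      c ^ m * Equiv.swap a b * (c ^ m)⁻¹ = Equiv.swap (a + (m : ZMod n)) (b + (m : ZMod n)) := by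
    intro m a b
    rw [← Equiv.swap_apply_apply, pow_apply_add c hc, pow_apply_add c hc]
  have shift_pairs : ∀ x : ZMod n, E x * E (x - d) ∈ G := by
    intro x
    have hm : ((x.val : ℕ) : ZMod n) = x := ZMod.natCast_zmod_val x
    set m : ℕ := x.val
    have e1 : E x = Equiv.swap (0 + (m : ZMod n)) (d + (m : ZMod n)) := by
      rw [zero_add, hm, add_comm d x]
    have e2 : E (x - d) = Equiv.swap (0 + (m : ZMod n)) (-d + (m : ZMod n)) := by
      rw [zero_add, hm]
      rw [hE]
      simp only []
      rw [sub_add_cancel, Equiv.swap_comm]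
      congr 1
      ring
    have hmem : c ^ m * (Equiv.swap 0 d * Equiv.swap 0 (-d)) * (c ^ m)⁻¹ ∈ G :=
      G.mul_mem (G.mul_mem (G.pow_mem hcG m) hg) (G.inv_mem (G.pow_mem hcG m))
    have heq : E x * E (x - d)
        = c ^ m * (Equiv.swap 0 d * Equiv.swap 0 (-d)) * (c ^ m)⁻¹ := by
      rw [e1, e2, ← key m 0 d, ← key m 0 (-d)]
      group
    rw [heq]
    exact hmem
  have chain : ∀ (m : ℕ) (x : ZMod n), E x * E (x - (m : ZMod n) * d) ∈ G := by
    intro m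
    induction m with
    | zero => intro x; rw [Nat.cast_zero, zero_mul, sub_zero, hE2]; exact G.one_mem
    | succ m ih =>
      intro x
      have h2 := shift_pairs (x - (m : ZMod n) * d)
      have heq : E x * E (x - ((m + 1 : ℕ) : ZMod n) * d)
          = (E x * E (x - (m : ZMod n) * d))
            * (E (x - (m : ZMod n) * d) * E (x - (m : ZMod n) * d - d)) := by
        rw [show (E x * E (x - (m : ZMod n) * d))
            * (E (x - (m : ZMod n) * d) * E (x - (m : ZMod n) * d - d))
            = E x * (E (x - (m : ZMod n) * d) * E (x - (m : ZMod n) * d))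
              * E (x - (m : ZMod n) * d - d) by group, hE2, mul_one]
        congr 2
        push_cast
        ring
      rw [heq]
      exact G.mul_mem (ih x) h2
  have pairs : ∀ x y : ZMod n, E x * E y ∈ G := by
    intro x y
    set u : (ZMod n)ˣ := ZMod.unitOfCoprime e he with hu
    have hud : (u : ZMod n) = d := rfl
    set m : ℕ := ((x - y) * ((u⁻¹ : (ZMod n)ˣ) : ZMod n)).val with hmdef
    have : x - (m : ZMod n) * d = y := by
      rw [hmdef, ZMod.natCast_zmod_val, mul_assoc, ← hud, ← Units.val_mul, inv_mul_cancel,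
        Units.val_one, mul_one, sub_sub_cancel]
    rw [← this]
    exact chain m x
  -- the subgroup H
  set S : Set (Equiv.Perm (ZMod n)) := {c} ∪ {p | ∃ x y : ZMod n, p = E x * E y} with hSdef
  set H : Subgroup (Equiv.Perm (ZMod n)) := Subgroup.closure S with hHdef
  have hcH : c ∈ H := Subgroup.subset_closure (Set.mem_union_left _ rfl)
  have hpairH : ∀ x y : ZMod n, E x * E y ∈ H := fun x y =>
    Subgroup.subset_closure (Set.mem_union_right _ ⟨x, y, rfl⟩)
  have HleG : H ≤ G := by
    rw [hHdef]
    refine (Subgroup.closure_le G).2 ?_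
    rintro p (hp | ⟨x, y, rfl⟩)
    · rw [Set.mem_singleton_iff] at hp; rw [hp]; exact hcG
    · exact pairs x y
  have Hsign : ∀ h ∈ H, Equiv.Perm.sign h = 1 := by
    intro h hh
    rw [hHdef] at hh
    induction hh using Subgroup.closure_induction with
    | mem p hp =>
      rcases hp with hp | ⟨x, y, rfl⟩
      · rw [Set.mem_singleton_iff] at hp; rw [hp]; exact hsc
      · have hne : ∀ z : ZMod n, z ≠ z + d := by
          intro z h
          exact hd0 (by linear_combination -h)
        rw [map_mul, hE]
        simp only []
        rw [Equiv.Perm.sign_swap (hne x), Equiv.Perm.sign_swap (hne y)]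
        decide
    | one => exact map_one _
    | mul a b _ _ ha hb => rw [map_mul, ha, hb, mul_one]
    | inv a _ ha => rw [map_inv, ha, inv_one]
  -- cycle facts
  obtain ⟨hcyc, hsupp, horder⟩ := isCycle_add_one (by omega) c hc
  have hecop : e.Coprime (orderOf c) := by rw [horder]; exact he
  have hc'cyc : (c ^ e).IsCycle := hcyc.pow_iff.2 hecop
  have hc'supp : (c ^ e).support = Finset.univ := by
    rw [Equiv.Perm.support_pow_coprime hecop, hsupp]
  have hc'0 : (c ^ e) 0 = d := by rw [pow_apply_add c hc, zero_add]
  have htop : Subgroup.closure {c ^ e, Equiv.swap 0 ((c ^ e) 0)} = ⊤ :=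
    Equiv.Perm.closure_cycle_adjacent_swap hc'cyc hc'supp 0
  have hE0eq : Equiv.swap 0 ((c ^ e) 0) = E 0 := by
    rw [hc'0, hE]; simp only []; rw [zero_add]
  -- conjugation by E 0 preserves H
  have conjE : ∀ h ∈ H, E 0 * h * (E 0)⁻¹ ∈ H := by
    intro h hh
    rw [hHdef] at hh
    induction hh using Subgroup.closure_induction with
    | mem p hp =>
      rcases hp with hp | ⟨x, y, rfl⟩
      · rw [Set.mem_singleton_iff] at hp
        rw [hp]
        have hcinv : ∀ z : ZMod n, c⁻¹ z = z - 1 := by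
          intro z
          apply c.injective
          rw [← Equiv.Perm.mul_apply, mul_inv_cancel, Equiv.Perm.one_apply, hc, sub_add_cancel]
        have hconj : c⁻¹ * E 0 * c = E (-1) := by
          rw [hE]
          simp only []
          rw [show c⁻¹ * Equiv.swap 0 (0 + d) * c = c⁻¹ * Equiv.swap 0 (0 + d) * (c⁻¹)⁻¹ by
            rw [inv_inv], ← Equiv.swap_apply_apply, hcinv, hcinv, zero_sub, zero_add]
          congr 1
          ring
        have heq : E 0 * c * (E 0)⁻¹ = c * ((c⁻¹ * E 0 * c) * E 0) := by
          rw [hEinv]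
          group
        rw [heq, hconj]
        exact H.mul_mem hcH (hpairH _ _)
      · have heq : E 0 * (E x * E y) * (E 0)⁻¹ = (E 0 * E x) * (E y * E 0) := by
          rw [hEinv]; group
        rw [heq]
        exact H.mul_mem (hpairH _ _) (hpairH _ _)
    | one =>
      have heq : E 0 * 1 * (E 0)⁻¹ = 1 := by group
      rw [heq]; exact H.one_mem
    | mul a b _ _ ha hb =>
      have heq : E 0 * (a * b) * (E 0)⁻¹ = (E 0 * a * (E 0)⁻¹) * (E 0 * b * (E 0)⁻¹) := by
        group
      rw [heq]; exact H.mul_mem ha hb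
    | inv a _ ha =>
      have heq : E 0 * a⁻¹ * (E 0)⁻¹ = (E 0 * a * (E 0)⁻¹)⁻¹ := by group
      rw [heq]; exact H.inv_mem ha
  -- every permutation is in H or H · (E 0)
  have main : ∀ ρ' : Equiv.Perm (ZMod n), ρ' ∈ H ∨ ρ' * E 0 ∈ H := by
    intro ρ'
    have hmem : ρ' ∈ Subgroup.closure {c ^ e, Equiv.swap 0 ((c ^ e) 0)} := by
      rw [htop]; exact Subgroup.mem_top ρ'
    induction hmem using Subgroup.closure_induction with
    | mem p hp =>
      rw [Set.mem_insert_iff, Set.mem_singleton_iff] at hp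
      rcases hp with rfl | rfl
      · exact Or.inl (H.pow_mem hcH e)
      · right
        rw [hE0eq, hE2]
        exact H.one_mem
    | one => exact Or.inl H.one_mem
    | mul a b _ _ ha hb =>
      rcases ha with ha | ha <;> rcases hb with hb | hb
      · exact Or.inl (H.mul_mem ha hb)
      · right
        rw [mul_assoc]
        exact H.mul_mem ha hb
      · right
        have key : (a * b) * E 0 = (a * E 0) * (E 0 * b * (E 0)⁻¹) := by
          rw [hEinv, show (a * E 0) * (E 0 * b * E 0) = a * (E 0 * E 0) * (b * E 0) by group,
            hE2 0]
          group
        rw [key]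
        exact H.mul_mem ha (conjE b hb)
      · left
        have key : a * b = (a * E 0) * (E 0 * (b * E 0) * (E 0)⁻¹) := by
          rw [show (a * E 0) * (E 0 * (b * E 0) * (E 0)⁻¹) = a * (E 0 * E 0) * b by group,
            hE2 0]
          group
        rw [key]
        exact H.mul_mem ha (conjE _ hb)
    | inv a _ ha =>
      rcases ha with ha | ha
      · exact Or.inl (H.inv_mem ha)
      · right
        have key : a⁻¹ * E 0 = E 0 * (a * E 0)⁻¹ * (E 0)⁻¹ := by
          rw [hEinv]; group
        rw [key]
        exact conjE _ (H.inv_mem ha)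
  rcases main ρ with hm | hm
  · exact HleG hm
  · exfalso
    have h1 := Hsign _ hm
    have hne : (0 : ZMod n) ≠ 0 + d := by
      intro h
      exact hd0 (by linear_combination -h)
    rw [map_mul, hρ, one_mul, hE] at h1
    simp only [] at h1
    rw [Equiv.Perm.sign_swap hne] at h1
    exact absurd h1 (by decide)

private lemma take_finRange_getElem (n k i : ℕ) (hkn : k ≤ n) (hi : i < k) :
    ((List.finRange n).take k)[i]'(by
      rw [List.length_take, List.length_finRange]; omega) = ⟨i, by omega⟩ := by
  rw [List.getElem_take, List.getElem_finRange]
  apply Fin.ext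
  simp

private lemma take_finRange_nodup (n k : ℕ) : ((List.finRange n).take k).Nodup :=
  (List.take_sublist _ _).nodup (List.nodup_finRange n)

private lemma drop_finRange_nodup (n j : ℕ) : ((List.finRange n).drop j).Nodup :=
  (List.drop_sublist _ _).nodup (List.nodup_finRange n)

private lemma drop_finRange_getElem (n j i : ℕ) (hi : i < n - j) :
    ((List.finRange n).drop j)[i]'(by
      rw [List.length_drop, List.length_finRange]; omega) = ⟨j + i, by omega⟩ := by
  rw [List.getElem_drop, List.getElem_finRange]
  apply Fin.ext
  simp

private lemma sigma_val (n k : ℕ) (hk : 1 ≤ k) (hkn : k ≤ n) (x : Fin n) (hx : x.val < k) :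
    (((List.finRange n).take k).formPerm x).val = (x.val + 1) % k := by
  have hlen : ((List.finRange n).take k).length = k := by
    rw [List.length_take, List.length_finRange]; omega
  have h1 : x.val < ((List.finRange n).take k).length := by omega
  have h := List.formPerm_apply_getElem _ (take_finRange_nodup n k) x.val h1
  rw [take_finRange_getElem n k x.val hkn hx] at h
  have hxx : (⟨x.val, by omega⟩ : Fin n) = x := Fin.ext rfl
  rw [hxx] at h
  rw [h]
  conv_lhs => rw [List.getElem_take, List.getElem_finRange]
  simp [hlen]

private lemma sigma_fix (n k : ℕ) (hkn : k ≤ n) (x : Fin n) (hx : k ≤ x.val) :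
    ((List.finRange n).take k).formPerm x = x := by
  apply List.formPerm_apply_of_notMem
  intro hmem
  rw [List.mem_iff_getElem] at hmem
  obtain ⟨i, hilen, hieq⟩ := hmem
  have hik : i < k := by
    rw [List.length_take, List.length_finRange] at hilen; omega
  rw [take_finRange_getElem n k i hkn hik] at hieq
  have := congrArg Fin.val hieq
  simp only [] at this
  omega

private lemma tau_val (n j : ℕ) (x : Fin n) (hx : j ≤ x.val) :
    (((List.finRange n).drop j).formPerm x).val = j + (x.val - j + 1) % (n - j) := by
  have hlen : ((List.finRange n).drop j).length = n - j := by
    rw [List.length_drop, List.length_finRange]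
  have hi : x.val - j < n - j := by have := x.isLt; omega
  have h1 : x.val - j < ((List.finRange n).drop j).length := by omega
  have h := List.formPerm_apply_getElem _ (drop_finRange_nodup n j) (x.val - j) h1
  rw [drop_finRange_getElem n j (x.val - j) hi] at h
  have hxx : (⟨j + (x.val - j), by omega⟩ : Fin n) = x := Fin.ext (by simp; omega)
  rw [hxx] at h
  rw [h]
  conv_lhs => rw [List.getElem_drop, List.getElem_finRange]
  simp [hlen]

private lemma tau_fix (n j : ℕ) (x : Fin n) (hx : x.val < j) :
    ((List.finRange n).drop j).formPerm x = x := by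
  apply List.formPerm_apply_of_notMem
  intro hmem
  rw [List.mem_iff_getElem] at hmem
  obtain ⟨i, hilen, hieq⟩ := hmem
  have hik : i < n - j := by
    rw [List.length_drop, List.length_finRange] at hilen; omega
  rw [drop_finRange_getElem n j i hik] at hieq
  have := congrArg Fin.val hieq
  simp only [] at this
  omega

private def pEquiv (n : ℕ) [NeZero n] : Fin n ≃ ZMod n where
  toFun x := (x.val : ZMod n)
  invFun z := ⟨z.val, ZMod.val_lt z⟩
  left_inv x := Fin.ext (by simp [ZMod.val_cast_of_lt x.isLt])
  right_inv z := ZMod.natCast_zmod_val z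

private lemma pEquiv_apply (n : ℕ) [NeZero n] (x : Fin n) :
    pEquiv n x = ((x.val : ℕ) : ZMod n) := rfl

private def thetaM (n : ℕ) [NeZero n] : Equiv.Perm (Fin n) ≃* Equiv.Perm (ZMod n) :=
  { (pEquiv n).permCongr with
    map_mul' := by
      intro p q
      ext z
      simp [Equiv.permCongr_apply] }

private lemma thetaM_apply (n : ℕ) [NeZero n] (ρ : Equiv.Perm (Fin n)) (z : ZMod n) :
    thetaM n ρ z = ((ρ ⟨z.val, ZMod.val_lt z⟩).val : ZMod n) := rfl

private lemma thetaM_swap (n : ℕ) [NeZero n] (a b : Fin n) :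
    thetaM n (Equiv.swap a b) = Equiv.swap (pEquiv n a) (pEquiv n b) := by
  show (pEquiv n).permCongr (Equiv.swap a b) = _
  rw [Equiv.permCongr_def, Equiv.symm_trans_swap_trans]

private lemma thetaM_sign (n : ℕ) [NeZero n] (ρ : Equiv.Perm (Fin n)) :
    Equiv.Perm.sign (thetaM n ρ) = Equiv.Perm.sign ρ :=
  Equiv.Perm.sign_permCongr (pEquiv n) ρ

private lemma core_mem (k : ℕ) (hk : 2 ≤ k)
    (σ τ : Equiv.Perm (Fin (2 * k - 1)))
    (hσ : σ = ((List.finRange (2 * k - 1)).take k).formPerm)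
    (hτ : τ = ((List.finRange (2 * k - 1)).drop (k - 1)).formPerm)
    (ρ : Equiv.Perm (Fin (2 * k - 1)))
    (hρ : Equiv.Perm.sign ρ = 1 ∨ k = 2) :
    ρ ∈ Subgroup.closure {σ, τ} := by
  haveI hnz : NeZero (2 * k - 1) := ⟨by omega⟩
  -- pointwise (σ * τ)
  have hval : ∀ x : Fin (2 * k - 1), ((σ * τ) x).val = (x.val + 1) % (2 * k - 1) := by
    intro x
    have hxlt := x.isLt
    rw [Equiv.Perm.mul_apply]
    rcases Nat.lt_or_ge x.val (k - 1) with h1 | h1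
    · have hτx : τ x = x := by rw [hτ]; exact tau_fix _ _ x h1
      rw [hτx, hσ, sigma_val _ k (by omega) (by omega) x (by omega)]
      rw [Nat.mod_eq_of_lt (show x.val + 1 < k by omega),
        Nat.mod_eq_of_lt (show x.val + 1 < 2 * k - 1 by omega)]
    · have hτx : (τ x).val = (k - 1) + (x.val - (k - 1) + 1) % (2 * k - 1 - (k - 1)) := by
        rw [hτ]; exact tau_val _ _ x h1
      rcases Nat.lt_or_ge x.val (2 * k - 2) with h2 | h2
      · have hτx' : (τ x).val = x.val + 1 := by
          rw [hτx, Nat.mod_eq_of_lt (show x.val - (k - 1) + 1 < 2 * k - 1 - (k - 1) by omega)]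
          omega
        have hστx : σ (τ x) = τ x := by
          rw [hσ]; exact sigma_fix _ k (by omega) _ (by omega)
        rw [hστx, hτx', Nat.mod_eq_of_lt (show x.val + 1 < 2 * k - 1 by omega)]
      · have hx2 : x.val = 2 * k - 2 := by omega
        have hτx' : (τ x).val = k - 1 := by
          rw [hτx, show x.val - (k - 1) + 1 = 2 * k - 1 - (k - 1) by omega, Nat.mod_self]
          omega
        rw [hσ, sigma_val _ k (by omega) (by omega) _ (by omega), hτx',
          show k - 1 + 1 = k by omega, Nat.mod_self, show x.val + 1 = 2 * k - 1 by omega,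
          Nat.mod_self]
  -- transported cycle is +1
  have hcZ : ∀ z : ZMod (2 * k - 1), (thetaM (2 * k - 1) (σ * τ)) z = z + 1 := by
    intro z
    rw [thetaM_apply, hval ⟨z.val, ZMod.val_lt z⟩, ZMod.natCast_mod, Nat.cast_add,
      Nat.cast_one, ZMod.natCast_zmod_val]
  -- the three special points
  have hA0 : (0 : ℕ) < 2 * k - 1 := by omega
  have hA1 : k - 1 < 2 * k - 1 := by omega
  have hA2 : k < 2 * k - 1 := by omega
  set A0 : Fin (2 * k - 1) := ⟨0, hA0⟩ with hA0d
  set A1 : Fin (2 * k - 1) := ⟨k - 1, hA1⟩ with hA1d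
  set A2 : Fin (2 * k - 1) := ⟨k, hA2⟩ with hA2d
  set X : Equiv.Perm (Fin (2 * k - 1)) := Equiv.swap A0 A1 * Equiv.swap A0 A2 with hXd
  have hA0v : A0.val = 0 := rfl
  have hA1v : A1.val = k - 1 := rfl
  have hA2v : A2.val = k := rfl
  have hXval : ∀ y : Fin (2 * k - 1), (X y).val =
      (if y.val = 0 then k else if y.val = k - 1 then 0 else if y.val = k then k - 1
        else y.val) := by
    intro y
    rw [hXd, Equiv.Perm.mul_apply]
    by_cases hy0 : y.val = 0
    · have hy : y = A0 := Fin.ext (by rw [hy0, hA0v])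
      have h2 : Equiv.swap A0 A2 y = A2 := by rw [hy, Equiv.swap_apply_left]
      have h3 : Equiv.swap A0 A1 A2 = A2 :=
        Equiv.swap_apply_of_ne_of_ne (Fin.ne_of_val_ne (by rw [hA2v, hA0v]; omega))
          (Fin.ne_of_val_ne (by rw [hA2v, hA1v]; omega))
      rw [h2, h3, if_pos hy0, hA2v]
    · by_cases hy1 : y.val = k - 1
      · have hy : y = A1 := Fin.ext (by rw [hy1, hA1v])
        have h2 : Equiv.swap A0 A2 y = A1 := by
          rw [hy]
          exact Equiv.swap_apply_of_ne_of_ne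
            (Fin.ne_of_val_ne (by rw [hA1v, hA0v]; omega))
            (Fin.ne_of_val_ne (by rw [hA1v, hA2v]; omega))
        have h3 : Equiv.swap A0 A1 A1 = A0 := Equiv.swap_apply_right _ _
        rw [h2, h3, if_neg hy0, if_pos hy1, hA0v]
      · by_cases hy2 : y.val = k
        · have hy : y = A2 := Fin.ext (by rw [hy2, hA2v])
          have h2 : Equiv.swap A0 A2 y = A0 := by rw [hy, Equiv.swap_apply_right]
          have h3 : Equiv.swap A0 A1 A0 = A1 := Equiv.swap_apply_left _ _
          rw [h2, h3, if_neg hy0, if_neg hy1, if_pos hy2, hA1v]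
        · have h2 : Equiv.swap A0 A2 y = y :=
            Equiv.swap_apply_of_ne_of_ne
              (Fin.ne_of_val_ne (by rw [hA0v]; omega))
              (Fin.ne_of_val_ne (by rw [hA2v]; omega))
          have h3 : Equiv.swap A0 A1 y = y :=
            Equiv.swap_apply_of_ne_of_ne
              (Fin.ne_of_val_ne (by rw [hA0v]; omega))
              (Fin.ne_of_val_ne (by rw [hA1v]; omega))
          rw [h2, h3, if_neg hy0, if_neg hy1, if_neg hy2]
  -- X ∘ (τ σ) = σ τ
  have key : ∀ x : Fin (2 * k - 1), (X (τ (σ x))).val = ((σ * τ) x).val := by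
    intro x
    have hxlt := x.isLt
    rw [hval x]
    rcases Nat.lt_or_ge x.val (k - 1) with h1 | h1
    · have hσx : (σ x).val = x.val + 1 := by
        rw [hσ, sigma_val _ k (by omega) (by omega) x (by omega),
          Nat.mod_eq_of_lt (by omega)]
      rw [Nat.mod_eq_of_lt (show x.val + 1 < 2 * k - 1 by omega)]
      rcases Nat.lt_or_ge (x.val + 1) (k - 1) with h2 | h2
      · have hτσx : τ (σ x) = σ x := by rw [hτ]; exact tau_fix _ _ _ (by omega)
        rw [hτσx, hXval, hσx, if_neg (by omega), if_neg (by omega), if_neg (by omega)]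
      · have h3 : x.val + 1 = k - 1 := by omega
        have hτσx : (τ (σ x)).val = k := by
          rw [hτ, tau_val _ _ _ (by omega), hσx,
            show x.val + 1 - (k - 1) + 1 = 1 by omega,
            Nat.mod_eq_of_lt (show 1 < 2 * k - 1 - (k - 1) by omega)]
          omega
        rw [hXval, hτσx, if_neg (by omega), if_neg (by omega), if_pos rfl]
        omega
    · rcases Nat.lt_or_ge x.val k with h2 | h2
      · -- x.val = k - 1
        rw [Nat.mod_eq_of_lt (show x.val + 1 < 2 * k - 1 by omega)]
        have hσx : (σ x).val = 0 := by
          rw [hσ, sigma_val _ k (by omega) (by omega) x (by omega),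
            show x.val + 1 = k by omega, Nat.mod_self]
        have hτσx : τ (σ x) = σ x := by rw [hτ]; exact tau_fix _ _ _ (by omega)
        rw [hτσx, hXval, hσx, if_pos rfl]
        omega
      · have hσx : σ x = x := by rw [hσ]; exact sigma_fix _ k (by omega) x h2
        rcases Nat.lt_or_ge x.val (2 * k - 2) with h3 | h3
        · rw [Nat.mod_eq_of_lt (show x.val + 1 < 2 * k - 1 by omega)]
          have hτx : (τ x).val = x.val + 1 := by
            rw [hτ, tau_val _ _ x (by omega),
              Nat.mod_eq_of_lt (show x.val - (k - 1) + 1 < 2 * k - 1 - (k - 1) by omega)]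
            omega
          rw [hσx, hXval, hτx, if_neg (by omega), if_neg (by omega), if_neg (by omega)]
        · rw [show x.val + 1 = 2 * k - 1 by omega, Nat.mod_self]
          have hτx : (τ x).val = k - 1 := by
            rw [hτ, tau_val _ _ x (by omega),
              show x.val - (k - 1) + 1 = 2 * k - 1 - (k - 1) by omega, Nat.mod_self]
            omega
          rw [hσx, hXval, hτx, if_neg (by omega), if_pos rfl]
  have hXeq : X * (τ * σ) = σ * τ := by
    apply Equiv.ext
    intro x
    exact Fin.ext (key x)
  have hcomm : σ * τ * σ⁻¹ * τ⁻¹ = X := by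
    have h := eq_mul_inv_of_mul_eq hXeq
    rw [h, mul_inv_rev]
    group
  -- signs
  have hlenσ : ((List.finRange (2 * k - 1)).take k).length = k := by
    rw [List.length_take, List.length_finRange]; omega
  have hlenτ : ((List.finRange (2 * k - 1)).drop (k - 1)).length = k := by
    rw [List.length_drop, List.length_finRange]; omega
  have hsignσ : Equiv.Perm.sign σ = -(-1) ^ k := by
    rw [hσ, (List.isCycle_formPerm (take_finRange_nodup _ _) (by omega)).sign,
      List.support_formPerm_of_nodup _ (take_finRange_nodup _ _) (fun x hx => by
        apply_fun List.length at hx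
        rw [hlenσ] at hx
        simp at hx
        omega),
      List.toFinset_card_of_nodup (take_finRange_nodup _ _), hlenσ]
  have hsignτ : Equiv.Perm.sign τ = -(-1) ^ k := by
    rw [hτ, (List.isCycle_formPerm (drop_finRange_nodup _ _) (by omega)).sign,
      List.support_formPerm_of_nodup _ (drop_finRange_nodup _ _) (fun x hx => by
        apply_fun List.length at hx
        rw [hlenτ] at hx
        simp at hx
        omega),
      List.toFinset_card_of_nodup (drop_finRange_nodup _ _), hlenτ]
  have hsignστ : Equiv.Perm.sign (σ * τ) = 1 := by
    rw [map_mul, hsignσ, hsignτ]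
    exact Int.units_mul_self _
  -- ZMod constants
  set dz : ZMod (2 * k - 1) := ((k - 1 : ℕ) : ZMod (2 * k - 1)) with hdz
  have he : (k - 1).Coprime (2 * k - 1) := by
    have h := (Nat.coprime_add_mul_right_right (k - 1) 1 2).2 (Nat.coprime_one_right _)
    rwa [show 1 + 2 * (k - 1) = 2 * k - 1 by omega] at h
  have hd0 : dz ≠ 0 := by
    rw [hdz, Ne, ZMod.natCast_eq_zero_iff]
    intro h
    have := Nat.le_of_dvd (by omega) h
    omega
  have hπ0 : pEquiv (2 * k - 1) A0 = 0 := by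
    show ((A0.val : ℕ) : ZMod (2 * k - 1)) = 0
    rw [hA0d]
    simp
  have hπ1 : pEquiv (2 * k - 1) A1 = dz := rfl
  have hπ2 : pEquiv (2 * k - 1) A2 = -dz := by
    show ((A2.val : ℕ) : ZMod (2 * k - 1)) = -dz
    rw [hA2d, hdz]
    apply eq_neg_of_add_eq_zero_left
    rw [← Nat.cast_add, show (k : ℕ) + (k - 1) = 2 * k - 1 by omega, ZMod.natCast_self]
  have hΘX : thetaM (2 * k - 1) X = Equiv.swap 0 dz * Equiv.swap 0 (-dz) := by
    rw [hXd, map_mul, thetaM_swap, thetaM_swap, hπ0, hπ1, hπ2]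
  -- membership in the transported closure
  set GZ : Subgroup (Equiv.Perm (ZMod (2 * k - 1))) :=
    Subgroup.closure {thetaM (2 * k - 1) σ, thetaM (2 * k - 1) τ} with hGZd
  have hσGZ : thetaM (2 * k - 1) σ ∈ GZ := Subgroup.subset_closure (Set.mem_insert _ _)
  have hτGZ : thetaM (2 * k - 1) τ ∈ GZ :=
    Subgroup.subset_closure (Set.mem_insert_of_mem _ rfl)
  have hcG : thetaM (2 * k - 1) (σ * τ) ∈ GZ := by
    rw [map_mul]; exact GZ.mul_mem hσGZ hτGZ
  have hgG : Equiv.swap 0 dz * Equiv.swap 0 (-dz) ∈ GZ := by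
    rw [← hΘX, ← hcomm, map_mul, map_mul, map_mul, map_inv, map_inv]
    exact GZ.mul_mem (GZ.mul_mem (GZ.mul_mem hσGZ hτGZ) (GZ.inv_mem hσGZ)) (GZ.inv_mem hτGZ)
  have hmemZ : thetaM (2 * k - 1) ρ ∈ GZ := by
    rcases hρ with hρ1 | hk2
    · exact zmod_even_mem (by omega) GZ (thetaM (2 * k - 1) (σ * τ)) hcZ hcG
        (by rw [thetaM_sign]; exact hsignστ) (k - 1) he hd0 hgG
        (thetaM (2 * k - 1) ρ) (by rw [thetaM_sign]; exact hρ1)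
    · -- k = 2 : the closure is everything
      obtain ⟨hcyc, hsupp, -⟩ :=
        isCycle_add_one (by omega) (thetaM (2 * k - 1) (σ * τ)) hcZ
      have htop := Equiv.Perm.closure_cycle_adjacent_swap hcyc hsupp 0
      have hle : Subgroup.closure {thetaM (2 * k - 1) (σ * τ),
          Equiv.swap 0 (thetaM (2 * k - 1) (σ * τ) 0)} ≤ GZ := by
        refine (Subgroup.closure_le GZ).2 ?_
        rintro p (rfl | hp)
        · exact hcG
        · rw [Set.mem_singleton_iff] at hp
          subst hp
          have h01 : thetaM (2 * k - 1) (σ * τ) 0 = 1 := by rw [hcZ 0, zero_add]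
          subst hk2
          have hσswap : σ = Equiv.swap ⟨0, by decide⟩ ⟨1, by decide⟩ := by
            rw [hσ]
            decide
          have : Equiv.swap (0 : ZMod (2 * 2 - 1)) (thetaM (2 * 2 - 1) (σ * τ) 0)
              = thetaM (2 * 2 - 1) σ := by
            rw [h01, hσswap, thetaM_swap, pEquiv_apply, pEquiv_apply]
            norm_num
          rw [this]
          exact hσGZ
      exact hle (htop ▸ Subgroup.mem_top _)
  -- transfer back along thetaM
  have hmap : GZ = Subgroup.map (thetaM (2 * k - 1)).toMonoidHom (Subgroup.closure {σ, τ}) := by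
    rw [MonoidHom.map_closure, hGZd]
    congr 1
    rw [Set.image_insert_eq, Set.image_singleton]
    rfl
  rw [hmap, Subgroup.mem_map_equiv] at hmemZ
  simpa using hmemZ

/-- For `k ≥ 2` (not necessarily even), with `σ = (1 2 … k)` and
`τ = (k k+1 … 2k−1)` in `S_{2k−1}` (0-indexed here: `σ` is the cycle on indices
`0,…,k-1` and `τ` the cycle on indices `k-1,…,2k-2`), for every bijection `f`
from the first `k` points to the last `k` points there is `ρ ∈ ⟨σ, τ⟩` agreeing
with `f` on each of the first `k` points. -/
theorem stmt_1 (k : ℕ) (hk : 2 ≤ k)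
    (σ τ : Equiv.Perm (Fin (2 * k - 1)))
    (hσ : σ = ((List.finRange (2 * k - 1)).take k).formPerm)
    (hτ : τ = ((List.finRange (2 * k - 1)).drop (k - 1)).formPerm)
    (f : {x : Fin (2 * k - 1) // x.val < k} ≃ {x : Fin (2 * k - 1) // k - 1 ≤ x.val}) :
    ∃ ρ ∈ Subgroup.closure {σ, τ},
      ∀ (x : Fin (2 * k - 1)) (hx : x.val < k), ρ x = (f ⟨x, hx⟩ : Fin (2 * k - 1)) := by
  have cardlt : ∀ j, j ≤ 2 * k - 1 →
      Fintype.card {x : Fin (2 * k - 1) // x.val < j} = j := by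
    intro j hj
    have e : {x : Fin (2 * k - 1) // x.val < j} ≃ Fin j :=
      { toFun := fun a => ⟨a.1.val, a.2⟩
        invFun := fun i => ⟨⟨i.val, by omega⟩, i.isLt⟩
        left_inv := fun a => Subtype.ext (Fin.ext rfl)
        right_inv := fun i => rfl }
    rw [Fintype.card_congr e, Fintype.card_fin]
  have c1 : Fintype.card {x : Fin (2 * k - 1) // ¬ (x.val < k)}
      = Fintype.card {x : Fin (2 * k - 1) // ¬ (k - 1 ≤ x.val)} := by
    rw [Fintype.card_subtype_compl, Fintype.card_fin, cardlt k (by omega)]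
    have e2 : {x : Fin (2 * k - 1) // ¬ (k - 1 ≤ x.val)}
        ≃ {x : Fin (2 * k - 1) // x.val < k - 1} :=
      Equiv.subtypeEquivRight (fun x => by omega)
    rw [Fintype.card_congr e2, cardlt (k - 1) (by omega)]
    omega
  let g := Fintype.equivOfCardEq c1
  let ρ₀ : Equiv.Perm (Fin (2 * k - 1)) :=
    ((Equiv.sumCompl (fun x : Fin (2 * k - 1) => x.val < k)).symm.trans
      ((f.sumCongr g).trans (Equiv.sumCompl (fun x : Fin (2 * k - 1) => k - 1 ≤ x.val))))
  have hρ₀ : ∀ (x : Fin (2 * k - 1)) (hx : x.val < k),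
      ρ₀ x = (f ⟨x, hx⟩ : Fin (2 * k - 1)) := by
    intro x hx
    show (Equiv.sumCompl (fun x : Fin (2 * k - 1) => k - 1 ≤ x.val))
      ((f.sumCongr g) ((Equiv.sumCompl (fun x : Fin (2 * k - 1) => x.val < k)).symm x)) = _
    have h1 : (Equiv.sumCompl (fun x : Fin (2 * k - 1) => x.val < k)).symm x
        = Sum.inl ⟨x, hx⟩ := by
      rw [Equiv.symm_apply_eq, Equiv.sumCompl_apply_inl]
    rw [Equiv.sumCongr_apply, h1, Sum.map_inl, Equiv.sumCompl_apply_inl]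
  rcases Int.units_eq_one_or (Equiv.Perm.sign ρ₀) with hs | hs
  · exact ⟨ρ₀, core_mem k hk σ τ hσ hτ ρ₀ (Or.inl hs), hρ₀⟩
  · by_cases hk2 : k = 2
    · exact ⟨ρ₀, core_mem k hk σ τ hσ hτ ρ₀ (Or.inr hk2), hρ₀⟩
    · have hk3 : 3 ≤ k := by omega
      set w : Equiv.Perm (Fin (2 * k - 1)) :=
        Equiv.swap ⟨0, by omega⟩ ⟨1, by omega⟩ with hw
      have hsign : Equiv.Perm.sign (w * ρ₀) = 1 := by
        rw [map_mul, hw, Equiv.Perm.sign_swap (Fin.ne_of_val_ne (show (0 : ℕ) ≠ 1 by omega)),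
          hs]
        decide
      refine ⟨w * ρ₀, core_mem k hk σ τ hσ hτ _ (Or.inl hsign), ?_⟩
      intro x hx
      rw [Equiv.Perm.mul_apply, hρ₀ x hx]
      have hge : k - 1 ≤ ((f ⟨x, hx⟩ : {x : Fin (2 * k - 1) // k - 1 ≤ x.val}) :
        Fin (2 * k - 1)).val := (f ⟨x, hx⟩).2
      apply Equiv.swap_apply_of_ne_of_ne
      · apply Fin.ne_of_val_ne
        show ((f ⟨x, hx⟩ : {x : Fin (2 * k - 1) // k - 1 ≤ x.val}) : Fin (2 * k - 1)).val ≠ 0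
        omega
      · apply Fin.ne_of_val_ne
        show ((f ⟨x, hx⟩ : {x : Fin (2 * k - 1) // k - 1 ≤ x.val}) : Fin (2 * k - 1)).val ≠ 1
        omega
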